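/- (Tartar's lemma, step I.) Under the hypotheses: E a Banach space, E₀, E₁ normed spaces, A₀ : E → E₀ compact linear, A₁ : E → E₁ continuous linear, and ‖g‖_E ≤ C₀(‖A₀g‖_{E₀} + ‖A₁g‖_{E₁}) for all g ∈ E, and assuming E is reflexive (so bounded sequences have weakly convergent subsequences), there exists a constant C₁ such that for all g ∈ E, inf_{p ∈ Ker(A₁)} ‖g − p‖_E ≤ C₁ ‖A₁ g‖_{E₁}. -/

import Mathlib

open Filter Topology

/-- Tartar's lemma, step I: under the compactness and norm-bound hypotheses, and assuming
`E` is reflexive in the sense that every bounded sequence has a weakly convergent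
subsequence, there is a constant `C₁` with
`inf_{p ∈ Ker A₁} ‖g − p‖ ≤ C₁ ‖A₁ g‖` for all `g ∈ E`. -/
theorem stmt_12 {E E₀ E₁ : Type*}
    [NormedAddCommGroup E] [NormedSpace ℝ E] [CompleteSpace E]
    [NormedAddCommGroup E₀] [NormedSpace ℝ E₀]
    [NormedAddCommGroup E₁] [NormedSpace ℝ E₁]
    (A₀ : E →L[ℝ] E₀) (hA₀ : IsCompactOperator A₀)
    (A₁ : E →L[ℝ] E₁)
    (C₀ : ℝ) (hbound : ∀ g : E, ‖g‖ ≤ C₀ * (‖A₀ g‖ + ‖A₁ g‖))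
    (hrefl : ∀ g : ℕ → E, Bornology.IsBounded (Set.range g) →
      ∃ (φ : ℕ → ℕ) (x : E), StrictMono φ ∧
        ∀ f : E →L[ℝ] ℝ, Tendsto (fun n => f (g (φ n))) atTop (𝓝 (f x))) :
    ∃ C₁ : ℝ, ∀ g : E,
      ⨅ p : LinearMap.ker (A₁ : E →ₗ[ℝ] E₁), ‖g - (p : E)‖ ≤ C₁ * ‖A₁ g‖ := by
  classical
  by_contra hcon
  push_neg at hcon
  set S := LinearMap.ker (A₁ : E →ₗ[ℝ] E₁) with hSdef
  have hbdd : ∀ g : E, BddBelow (Set.range fun p : S => ‖g - (p : E)‖) := by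
    intro g
    refine ⟨0, ?_⟩
    rintro x ⟨p, rfl⟩
    exact norm_nonneg _
  -- Step 1: build the normalized sequence
  have key : ∀ n : ℕ, ∃ h : E, ‖h‖ = 1 ∧ ‖A₁ h‖ ≤ 1 / (n + 1) ∧
      ∀ q ∈ S, (1 : ℝ) / 2 ≤ ‖h - q‖ := by
    intro n
    obtain ⟨g, hg⟩ := hcon ((n : ℝ) + 1)
    set Q : ℝ := ⨅ p : S, ‖g - (p : E)‖ with hQdef
    have hQpos : 0 < Q :=
      lt_of_le_of_lt (by positivity) hg
    obtain ⟨p, hp⟩ : ∃ p : S, ‖g - (p : E)‖ < 2 * Q := by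
      apply exists_lt_of_ciInf_lt
      rw [← hQdef]; linarith
    set r : ℝ := ‖g - (p : E)‖ with hrdef
    have hrQ : Q ≤ r := ciInf_le (hbdd g) p
    have hrpos : 0 < r := lt_of_lt_of_le hQpos hrQ
    refine ⟨r⁻¹ • (g - (p : E)), ?_, ?_, ?_⟩
    · rw [norm_smul, norm_inv, Real.norm_eq_abs, abs_of_pos hrpos, ← hrdef,
        inv_mul_cancel₀ hrpos.ne']
    · have hA1p : A₁ (p : E) = 0 := p.2
      have h1 : ‖A₁ (r⁻¹ • (g - (p : E)))‖ = r⁻¹ * ‖A₁ g‖ := by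
        rw [map_smul, map_sub, hA1p, sub_zero, norm_smul, norm_inv, Real.norm_eq_abs,
          abs_of_pos hrpos]
      rw [h1]
      have hA1g : ‖A₁ g‖ ≤ Q / ((n : ℝ) + 1) := by
        rw [le_div_iff₀ (by positivity)]
        nlinarith [hg]
      calc r⁻¹ * ‖A₁ g‖ ≤ Q⁻¹ * (Q / ((n : ℝ) + 1)) := by
            apply mul_le_mul (inv_anti₀ hQpos hrQ) hA1g (norm_nonneg _) (by positivity)
        _ = 1 / ((n : ℝ) + 1) := by field_simp
    · intro q hq
      have hmem : ((p : E) + r • q) ∈ S := S.add_mem p.2 (S.smul_mem r hq)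
      have hle : Q ≤ ‖g - ((p : E) + r • q)‖ := ciInf_le (hbdd g) ⟨_, hmem⟩
      have heq : r⁻¹ • (g - (p : E)) - q = r⁻¹ • (g - ((p : E) + r • q)) := by
        rw [smul_sub, smul_sub, smul_add, smul_smul, inv_mul_cancel₀ hrpos.ne', one_smul]
        abel
      rw [heq, norm_smul, norm_inv, Real.norm_eq_abs, abs_of_pos hrpos]
      calc (1 : ℝ) / 2 = r⁻¹ * (r / 2) := by field_simp
        _ ≤ r⁻¹ * Q := by
            apply mul_le_mul_of_nonneg_left (by linarith) (by positivity)
        _ ≤ r⁻¹ * ‖g - ((p : E) + r • q)‖ :=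
            mul_le_mul_of_nonneg_left hle (by positivity)
  choose h hnorm hA1h hfar using key
  -- Step 2: the sequence is bounded; extract a subsequence with A₀ ∘ h converging
  have hbnd : Bornology.IsBounded (Set.range h) := by
    apply Metric.isBounded_range_iff.2
    refine ⟨2, fun m n => ?_⟩
    calc dist (h m) (h n) ≤ ‖h m‖ + ‖h n‖ := dist_le_norm_add_norm _ _
      _ ≤ 2 := by rw [hnorm, hnorm]; norm_num
  have hA₀' : IsCompactOperator ⇑(A₀ : E →ₗ[ℝ] E₀) := hA₀
  obtain ⟨K, hK, hKsub⟩ := hA₀'.image_subset_compact_of_bounded hbnd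
  have hmemK : ∀ n, A₀ (h n) ∈ K := fun n => hKsub ⟨h n, ⟨n, rfl⟩, rfl⟩
  obtain ⟨y, -, φ, hφ, hconv⟩ := hK.tendsto_subseq hmemK
  -- A₁ along the subsequence tends to 0 in norm
  have hA1sub : Tendsto (fun n => ‖A₁ (h (φ n))‖) atTop (𝓝 0) := by
    apply squeeze_zero (fun n => norm_nonneg _) (fun n => ?_)
      tendsto_one_div_add_atTop_nhds_zero_nat
    calc ‖A₁ (h (φ n))‖ ≤ 1 / ((φ n : ℝ) + 1) := hA1h (φ n)
      _ ≤ 1 / ((n : ℝ) + 1) := by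
          apply one_div_le_one_div_of_le (by positivity)
          have h3 : (n : ℝ) ≤ (φ n : ℝ) := Nat.cast_le.2 hφ.le_apply
          linarith
  -- Improved bound with positive constant
  set C : ℝ := max C₀ 1 with hCdef
  have hCpos : 0 < C := lt_of_lt_of_le one_pos (le_max_right _ _)
  have hbound' : ∀ g : E, ‖g‖ ≤ C * (‖A₀ g‖ + ‖A₁ g‖) := fun g =>
    (hbound g).trans (mul_le_mul_of_nonneg_right (le_max_left _ _) (by positivity))
  -- Step 3: the subsequence is Cauchy
  have hcau : CauchySeq (fun n => h (φ n)) := by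
    rw [Metric.cauchySeq_iff]
    intro ε hε
    have hε4 : 0 < ε / (4 * C) := by positivity
    obtain ⟨N₁, hN₁⟩ := (Metric.tendsto_atTop.1 hconv) (ε / (4 * C)) hε4
    obtain ⟨N₂, hN₂⟩ := (Metric.tendsto_atTop.1 hA1sub) (ε / (4 * C)) hε4
    refine ⟨max N₁ N₂, fun m hm n hn => ?_⟩
    have h1m := hN₁ m (le_trans (le_max_left _ _) hm)
    have h1n := hN₁ n (le_trans (le_max_left _ _) hn)
    have h2m := hN₂ m (le_trans (le_max_right _ _) hm)
    have h2n := hN₂ n (le_trans (le_max_right _ _) hn)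
    simp only [Function.comp_apply] at h1m h1n
    rw [Real.dist_eq, sub_zero, abs_of_nonneg (norm_nonneg _)] at h2m h2n
    have e0 : ‖A₀ (h (φ m) - h (φ n))‖ ≤ dist (A₀ (h (φ m))) y + dist (A₀ (h (φ n))) y := by
      rw [map_sub, ← dist_eq_norm]
      exact (dist_triangle _ y _).trans (by rw [dist_comm y])
    have e1 : ‖A₁ (h (φ m) - h (φ n))‖ ≤ ‖A₁ (h (φ m))‖ + ‖A₁ (h (φ n))‖ := by
      rw [map_sub]; exact norm_sub_le _ _
    have := hbound' (h (φ m) - h (φ n))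
    rw [dist_eq_norm]
    calc ‖h (φ m) - h (φ n)‖
        ≤ C * (‖A₀ (h (φ m) - h (φ n))‖ + ‖A₁ (h (φ m) - h (φ n))‖) := this
      _ < C * (4 * (ε / (4 * C))) := by
          apply mul_lt_mul_of_pos_left _ hCpos
          linarith
      _ = ε := by field_simp
  -- Step 4: limit is in the kernel, contradiction
  obtain ⟨x, hx⟩ := cauchySeq_tendsto_of_complete hcau
  have hxS : x ∈ S := by
    have t1 : Tendsto (fun n => A₁ (h (φ n))) atTop (𝓝 (A₁ x)) :=
      (A₁.continuous.tendsto x).comp hx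
    have t2 : Tendsto (fun n => A₁ (h (φ n))) atTop (𝓝 0) := by
      rw [← norm_zero (E := E₁)] at hA1sub
      exact tendsto_zero_iff_norm_tendsto_zero.2 (by simpa using hA1sub)
    exact LinearMap.mem_ker.2 (tendsto_nhds_unique t1 t2)
  obtain ⟨N, hN⟩ := (Metric.tendsto_atTop.1 hx) (1 / 2) (by norm_num)
  have hlt := hN N le_rfl
  rw [dist_eq_norm] at hlt
  exact absurd (hfar (φ N) x hxS) (not_le.2 hlt)
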